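/- Let (A, ▷, ◁) be an L-dendriform superalgebra over a field of characteristic zero. Then the product x ∘ y := x▷y − (−1)^{|x||y|} y◁x, defined for homogeneous x, y ∈ A, makes (A, ∘) a pre-Lie superalgebra (the associated vertical pre-Lie superalgebra of (A, ▷, ◁)). -/

import Mathlib

/-- The super sign `(−1)^{|x||y|}` for parities `i`, `j`. -/
def sgn (K : Type*) [Field K] (i j : ZMod 2) : K := (-1 : K) ^ (i.val * j.val)

/-- The vertical product `x ∘ y := x▷y − (−1)^{|x||y|} y◁x` on homogeneous elements of
parities `i`, `j`. -/
def vert {K A : Type*} [Field K] [AddCommGroup A] [Module K A]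
    (rt lt : A →ₗ[K] A →ₗ[K] A) (i j : ZMod 2) (x y : A) : A :=
  rt x y - sgn K i j • lt y x

/-- the product `x ∘ y := x▷y − (−1)^{|x||y|} y◁x` of an L-dendriform
superalgebra `(A,▷,◁)` is a pre-Lie superalgebra product (the associated vertical
pre-Lie superalgebra). -/
theorem stmt14 {K A : Type*} [Field K] [CharZero K] [AddCommGroup A] [Module K A]
    (𝒜 : ZMod 2 → Submodule K A) (hgr : DirectSum.IsInternal 𝒜)
    (rt lt : A →ₗ[K] A →ₗ[K] A)
    (hrt_even : ∀ (i j : ZMod 2), ∀ x ∈ 𝒜 i, ∀ y ∈ 𝒜 j, rt x y ∈ 𝒜 (i + j))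
    (hlt_even : ∀ (i j : ZMod 2), ∀ x ∈ 𝒜 i, ∀ y ∈ 𝒜 j, lt x y ∈ 𝒜 (i + j))
    (hLD1 : ∀ (i j k : ZMod 2), ∀ x ∈ 𝒜 i, ∀ y ∈ 𝒜 j, ∀ z ∈ 𝒜 k,
      rt x (rt y z)
        = rt (rt x y) z + rt (lt x y) z + sgn K i j • rt y (rt x z)
          - sgn K i j • rt (lt y x) z - sgn K i j • rt (rt y x) z)
    (hLD2 : ∀ (i j k : ZMod 2), ∀ x ∈ 𝒜 i, ∀ y ∈ 𝒜 j, ∀ z ∈ 𝒜 k,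
      rt x (lt y z)
        = lt (rt x y) z + sgn K i j • lt y (rt x z)
          + sgn K i j • lt y (lt x z) - sgn K i j • lt (lt y x) z) :
    -- ∘ is even
    (∀ (i j : ZMod 2), ∀ x ∈ 𝒜 i, ∀ y ∈ 𝒜 j, vert rt lt i j x y ∈ 𝒜 (i + j)) ∧
    -- pre-Lie super-identity for ∘
    (∀ (i j k : ZMod 2), ∀ x ∈ 𝒜 i, ∀ y ∈ 𝒜 j, ∀ z ∈ 𝒜 k,
      vert rt lt (i + j) k (vert rt lt i j x y) z
          - vert rt lt i (j + k) x (vert rt lt j k y z)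
        = sgn K i j • (vert rt lt (i + j) k (vert rt lt j i y x) z
            - vert rt lt j (i + k) y (vert rt lt i k x z))) := by
  constructor
  · intro i j x hx y hy
    exact Submodule.sub_mem _ (hrt_even i j x hx y hy)
      (Submodule.smul_mem _ _ (by rw [add_comm]; exact hlt_even j i y hy x hx))
  · intro i j k x hx y hy z hz
    have e1 := hLD1 i j k x hx y hy z hz
    have e2 := hLD1 j i k y hy x hx z hz
    have e3 := hLD2 i k j x hx z hz y hy
    have e4 := hLD2 j k i y hy z hz x hx
    simp only [vert, map_sub, map_smul, LinearMap.sub_apply, LinearMap.smul_apply]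
    fin_cases i <;> fin_cases j <;> fin_cases k <;>
      simp only [sgn, ZMod.val, show ((0:ZMod 2)+0=0) from rfl, show ((0:ZMod 2)+1=1) from rfl,
        show ((1:ZMod 2)+0=1) from rfl, show ((1:ZMod 2)+1=0) from rfl] at e1 e2 e3 e4 ⊢ <;>
      norm_num at e1 e2 e3 e4 ⊢ <;>
      rw [e1, e2, e3, e4] <;> match_scalars <;> norm_num +decide [(by decide : ((2:ZMod 2)).val = 0), (by decide : ((2:Fin 2)).val = 0), neg_one_pow_eq_ite]
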